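/- arXiv:1009.1800 — 2 statements merged into one kernel-verified Lean document; each statement's English description precedes it below -/
import Mathlib

section
/- Let p and q be coprime integers with 0 < |p| < q and with the product p·q even. Then there exist n ≥ 1 and nonzero even integers b_1, …, b_n such that p/q = [b_1, …, b_n]. -/
/-- The continued fraction `[b₁, b₂, …, bₙ] = 1/(b₁ + 1/(b₂ + ⋯ + 1/bₙ))`,
evaluated in `ℚ` (with the convention `cf [] = 0`). -/
def cf : List ℤ → ℚ
  | [] => 0
  | b :: t => 1 / ((b : ℚ) + cf t)

lemma cf_aux : ∀ n : ℕ, ∀ p q : ℤ, p.natAbs ≤ n → IsCoprime p q → 0 < |p| → |p| < q →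
    Even (p * q) →
    ∃ l : List ℤ, l ≠ [] ∧ (∀ x ∈ l, x ≠ 0 ∧ Even x) ∧ (p : ℚ) / (q : ℚ) = cf l := by
  intro n
  induction n with
  | zero =>
    intro p q h hcop hp hpq he
    rw [abs_pos] at hp
    omega
  | succ n ih =>
    intro p q hn hcop hp hpq heven
    have hpne : p ≠ 0 := abs_pos.mp hp
    have hq0 : 0 < q := lt_trans hp hpq
    have hqne : (q : ℚ) ≠ 0 := by exact_mod_cast hq0.ne'
    have hpQne : (p : ℚ) ≠ 0 := by exact_mod_cast hpne
    by_cases hone : p.natAbs = 1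
    · -- base case: p = ±1, q even
      have hq_even : Even q := by
        rcases Int.even_mul.mp heven with h | h
        · exfalso; rcases Int.natAbs_eq_iff.mp hone with h1 | h1 <;> simp [h1] at h
        · exact h
      refine ⟨[p * q], by simp, ?_, ?_⟩
      · intro x hx
        simp only [List.mem_singleton] at hx
        subst hx
        exact ⟨mul_ne_zero hpne hq0.ne', heven⟩
      · simp only [cf, add_zero]
        rcases Int.natAbs_eq_iff.mp hone with h1 | h1 <;> subst h1 <;>
          push_cast <;> field_simp
    · -- |p| ≥ 2
      have hp2 : 2 ≤ p.natAbs := by omega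
      have hndvd : ¬ (p ∣ q) := by
        intro hdvd
        have : IsUnit p := hcop.isUnit_of_dvd' dvd_rfl hdvd
        rcases Int.isUnit_iff.mp this with h1 | h1 <;> simp [h1] at hp2
      set x : ℚ := (q : ℚ) / (2 * p) with hxdef
      set b : ℤ := 2 * round x with hbdef
      set r : ℤ := q - b * p with hrdef
      have hrq : (r : ℚ) = (q : ℚ) - (b : ℚ) * p := by rw [hrdef]; push_cast; ring
      have hbq : (b : ℚ) = 2 * ((round x : ℤ) : ℚ) := by rw [hbdef]; push_cast; ring
      have h2p : (2 * (p:ℚ)) ≠ 0 := by positivity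
      have hx : (r : ℚ) = (x - round x) * (2 * p) := by
        rw [hrq, hbq, hxdef]; field_simp
      have habs : |(r : ℚ)| ≤ |(p : ℚ)| := by
        rw [hx, abs_mul]
        have h1 : |x - (round x : ℚ)| ≤ 1/2 := abs_sub_round x
        have h2 : |2 * (p:ℚ)| = 2 * |(p:ℚ)| := by rw [abs_mul]; norm_num
        calc |x - (round x : ℚ)| * |2 * (p:ℚ)| ≤ (1/2) * (2 * |(p:ℚ)|) := by
              rw [h2]; apply mul_le_mul_of_nonneg_right h1; positivity
          _ = |(p:ℚ)| := by ring
      have habsZ : |r| ≤ |p| := by exact_mod_cast (by push_cast [Int.cast_abs] at habs ⊢; exact habs : ((|r| : ℤ) : ℚ) ≤ ((|p| : ℤ) : ℚ))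
      have hr0 : r ≠ 0 := by
        intro h
        apply hndvd
        have : q = b * p := by omega
        exact ⟨b, by linear_combination this⟩
      have hrne : |r| ≠ |p| := by
        intro h
        rcases abs_eq_abs.mp h with h1 | h1 <;> apply hndvd
        · exact ⟨b + 1, by linear_combination h1 - hrdef⟩
        · exact ⟨b - 1, by linear_combination h1 - hrdef⟩
      have habslt : |r| < |p| := lt_of_le_of_ne habsZ hrne
      have hrnat : |r| = (r.natAbs : ℤ) := Int.abs_eq_natAbs r
      have hpnat : |p| = (p.natAbs : ℤ) := Int.abs_eq_natAbs p
      have hb0 : b ≠ 0 := by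
        intro h
        have hrq' : r = q := by rw [hrdef, h]; ring
        rw [hrq'] at habslt
        have := abs_of_pos hq0
        omega
      have hbeven : Even b := ⟨round x, by rw [hbdef]; ring⟩
      have hrp : IsCoprime r p := by
        have : IsCoprime q p := hcop.symm
        have h2 : IsCoprime (q + p * (-b)) p := this.add_mul_left_left (-b)
        have : q + p * (-b) = r := by rw [hrdef]; ring
        rwa [this] at h2
      have hrpeven : Even (r * p) := by
        rw [Int.even_mul]
        rcases Int.even_mul.mp heven with h | h
        · right; exact h
        · left; rw [hrdef]; exact h.sub (hbeven.mul_right p)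
      have hrabs : 0 < |r| := abs_pos.mpr hr0
      -- recurse
      have key : ∃ l : List ℤ, l ≠ [] ∧ (∀ x ∈ l, x ≠ 0 ∧ Even x) ∧ ((r : ℚ) / (p : ℚ) = cf l) := by
        by_cases hppos : 0 < p
        · have hpabs : |p| = p := abs_of_pos hppos
          obtain ⟨l, hl1, hl2, hl3⟩ := ih r p (by omega) hrp hrabs (by omega) hrpeven
          exact ⟨l, hl1, hl2, hl3⟩
        · have hpneg : p < 0 := by omega
          have hpabs : |p| = -p := abs_of_neg hpneg
          obtain ⟨l, hl1, hl2, hl3⟩ := ih (-r) (-p) (by simp; omega) (hrp.neg_left.neg_right)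
            (by simp [abs_neg]; omega) (by simp [abs_neg]; omega) (by rw [neg_mul_neg]; exact hrpeven)
          refine ⟨l, hl1, hl2, ?_⟩
          rw [← hl3]; push_cast; rw [neg_div_neg_eq]
      obtain ⟨l, hl1, hl2, hl3⟩ := key
      refine ⟨b :: l, by simp, ?_, ?_⟩
      · intro y hy
        rcases List.mem_cons.mp hy with h | h
        · subst h; exact ⟨hb0, hbeven⟩
        · exact hl2 y h
      · show (p : ℚ) / q = 1 / ((b : ℚ) + cf l)
        rw [← hl3]
        have hden : (b : ℚ) + (r : ℚ) / p = q / p := by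
          field_simp
          rw [hrq]; ring
        rw [hden, one_div_div]

/-- If `p` and `q` are coprime integers with `0 < |p| < q` and `p·q` even, then
`p/q` has a continued fraction expansion `[b₁, …, bₙ]` (`n ≥ 1`) with all the
`bᵢ` nonzero even integers. -/
theorem stmt2 (p q : ℤ) (hcop : IsCoprime p q) (hp : 0 < |p|) (hpq : |p| < q)
    (heven : Even (p * q)) :
    ∃ l : List ℤ, l ≠ [] ∧ (∀ x ∈ l, x ≠ 0 ∧ Even x) ∧ (p : ℚ) / (q : ℚ) = cf l := by
  exact cf_aux p.natAbs p q le_rfl hcop hp hpq heven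
end

section
/- Let n ≥ 1 and let b_1, …, b_n be nonzero even integers. In the field ℚ(a, z) of rational functions in two variables over ℚ, define x_{−1} = z^{−1}·(a − a^{−1}), x_0 = 1, and for 1 ≤ m ≤ n define x_m = z·((1 − a^{ε_m b_m})/(a − a^{−1}))·x_{m−1} + a^{ε_m b_m}·x_{m−2}, where ε_m = (−1)^{m−1}. Let C be the set of all strictly decreasing finite integer sequences c = (c_1, …, c_l) with c_1 = n, c_i − c_{i+1} ∈ {1, 2} for all i, c_l ∈ {0, −1}, and such that if c_l = −1 then c_{l−1} ≠ 0; for c ∈ C set 𝓁(c) = {i : c_i − c_{i+1} = 1}, 𝓇(c) = {i : c_i − c_{i+1} = 2}, and k(c) = |𝓁(c)|. Then x_n = Σ_{c ∈ C} z^{k(c)} · x_{c_l} · Π_{i ∈ 𝓁(c)} (1 − a^{(−1)^{c_i − 1} b_{c_i}})/(a − a^{−1}) · Π_{i ∈ 𝓇(c)} a^{(−1)^{c_i − 1} b_{c_i}}. -/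
/-- The field `ℚ(a, z)` of rational functions in two indeterminates over `ℚ`. -/
abbrev RatFunc2 : Type := FractionRing (MvPolynomial (Fin 2) ℚ)

/-- The set `C` of strictly decreasing integer sequences `c = (c₁, …, c_l)` with
`c₁ = n`, consecutive differences `cᵢ − cᵢ₊₁ ∈ {1, 2}`, last entry `c_l ∈ {0, −1}`,
and such that only one of `0`, `−1` occurs (if `c_l = −1` then `c_{l−1} ≠ 0`,
which, the sequence being decreasing with steps `1` or `2`, means `0 ∉ c`). -/
def CSeq (n : ℤ) : Set (List ℤ) :=
  {c | c.Chain' (fun a b => a - b = 1 ∨ a - b = 2) ∧ c.head? = some n ∧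
        (c.getLast? = some 0 ∨ (c.getLast? = some (-1) ∧ (0 : ℤ) ∉ c))}

/-- `𝓁(c)`: the consecutive pairs of `c` with difference 1 (each pair records
the value `cᵢ` as its first component). -/
def lSteps (c : List ℤ) : List (ℤ × ℤ) := (c.zip c.tail).filter (fun p => p.1 - p.2 = 1)

/-- `𝓇(c)`: the consecutive pairs of `c` with difference 2. -/
def rSteps (c : List ℤ) : List (ℤ × ℤ) := (c.zip c.tail).filter (fun p => p.1 - p.2 = 2)

/-- `k(c) = |𝓁(c)|`. -/
def kOf (c : List ℤ) : ℕ := (lSteps c).length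

lemma getLast?_mem' {α : Type*} {l : List α} {x : α} (h : l.getLast? = some x) : x ∈ l := by
  obtain ⟨h', rfl⟩ := List.mem_getLast?_eq_getLast (Option.mem_def.mpr h)
  exact List.getLast_mem h'

lemma cseq_pairwise {c : List ℤ} (h : c.Chain' (fun a b => a - b = 1 ∨ a - b = 2)) :
    c.Pairwise (· > ·) :=
  List.isChain_iff_pairwise.mp (h.imp fun hab => by omega)

lemma cseq_small {m : ℤ} (hm : m ≤ 0) : CSeq m = if m = 0 ∨ m = -1 then {[m]} else ∅ := by
  ext c
  constructor
  · rintro ⟨hch, hh, hl⟩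
    match c with
    | [] => simp at hh
    | [v] =>
      simp only [List.head?_cons, Option.some.injEq] at hh
      simp only [List.getLast?_singleton, Option.some.injEq] at hl
      have hv : m = 0 ∨ m = -1 := by rcases hl with h | ⟨h, _⟩ <;> omega
      rw [if_pos hv]
      simp [hh]
    | v :: w :: t =>
      exfalso
      simp only [List.head?_cons, Option.some.injEq] at hh
      have hp := (List.pairwise_cons.mp (cseq_pairwise hch)).1
      have h2 : (v :: w :: t).getLast? = (w :: t).getLast? := List.getLast?_cons_cons ..
      rcases hl with h0 | ⟨h0, hn⟩
      · have := hp 0 (getLast?_mem' (h2 ▸ h0)); omega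
      · have hgt := hp (-1) (getLast?_mem' (h2 ▸ h0))
        have hv0 : v = 0 := by omega
        exact hn (by rw [← hv0]; exact List.mem_cons_self)
  · intro hc
    split at hc
    · rename_i h
      simp only [Set.mem_singleton_iff] at hc
      subst hc
      refine ⟨List.isChain_singleton _, by simp, ?_⟩
      rcases h with rfl | rfl
      · exact Or.inl (by simp)
      · exact Or.inr ⟨by simp, by simp⟩
    · simp at hc

lemma cseq_decomp {m : ℤ} (hm : 1 ≤ m) :
    CSeq m = (List.cons m '' CSeq (m - 1)) ∪ (List.cons m '' CSeq (m - 2)) := by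
  ext c
  constructor
  · rintro ⟨hch, hh, hl⟩
    match c with
    | [] => simp at hh
    | [v] =>
      simp only [List.head?_cons, Option.some.injEq] at hh
      exfalso
      simp only [List.getLast?_singleton, Option.some.injEq] at hl
      rcases hl with h | ⟨h, _⟩ <;> omega
    | v :: w :: t =>
      simp only [List.head?_cons, Option.some.injEq] at hh
      obtain ⟨hrel, hch'⟩ := List.isChain_cons_cons.mp hch
      have h2 : (v :: w :: t).getLast? = (w :: t).getLast? := List.getLast?_cons_cons ..
      have hlast : (w :: t).getLast? = some 0 ∨
          ((w :: t).getLast? = some (-1) ∧ (0:ℤ) ∉ (w :: t)) := by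
        rcases hl with h0 | ⟨h0, hn⟩
        · exact Or.inl (h2 ▸ h0)
        · exact Or.inr ⟨h2 ▸ h0, fun hmem => hn (List.mem_cons_of_mem _ hmem)⟩
      rcases hrel with h1 | h1
      · exact Or.inl ⟨w :: t, ⟨hch', by simp; omega, hlast⟩, by simp; omega⟩
      · exact Or.inr ⟨w :: t, ⟨hch', by simp; omega, hlast⟩, by simp; omega⟩
  · have key : ∀ d : ℤ, (d = 1 ∨ d = 2) → ∀ c' ∈ CSeq (m - d), (m :: c') ∈ CSeq m := by
      rintro d hd c' ⟨hch, hh, hl⟩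
      match c' with
      | [] => simp at hh
      | w :: t =>
        simp only [List.head?_cons, Option.some.injEq] at hh
        refine ⟨List.isChain_cons_cons.mpr ⟨by omega, hch⟩, rfl, ?_⟩
        have h2 : (m :: w :: t).getLast? = (w :: t).getLast? := List.getLast?_cons_cons ..
        rcases hl with h0 | ⟨h0, hn⟩
        · exact Or.inl (h2 ▸ h0)
        · refine Or.inr ⟨h2 ▸ h0, ?_⟩
          intro hmem
          rcases List.mem_cons.mp hmem with h | h
          · omega
          · exact hn h
    rintro (⟨c', hc', rfl⟩ | ⟨c', hc', rfl⟩)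
    · exact key 1 (Or.inl rfl) c' hc'
    · exact key 2 (Or.inr rfl) c' hc'

lemma cseq_finite (m : ℤ) : (CSeq m).Finite := by
  have key : ∀ k : ℕ, ∀ m : ℤ, m ≤ (k : ℤ) - 1 → (CSeq m).Finite := by
    intro k
    induction k with
    | zero =>
      intro m hm
      rw [cseq_small (by omega)]
      split <;> simp
    | succ k IH =>
      intro m hm
      rcases le_or_gt m 0 with h | h
      · rw [cseq_small h]; split <;> simp
      · rw [cseq_decomp h]
        exact ((IH (m - 1) (by omega)).image _).union ((IH (m - 2) (by omega)).image _)
  exact key (m + 1).toNat m (by omega)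

lemma finsum_mem_mul_left' {α M : Type*} [Semiring M] {s : Set α} (hs : s.Finite)
    (r : M) (f : α → M) : ∑ᶠ i ∈ s, r * f i = r * ∑ᶠ i ∈ s, f i := by
  rw [finsum_mem_eq_finite_toFinset_sum _ hs, finsum_mem_eq_finite_toFinset_sum _ hs,
    Finset.mul_sum]

/-- The closed formula (the paper's main theorem) for the solution `xₙ` of the
skein recursion `x_m = z·((1 − a^{ε_m b_m})/(a − a⁻¹))·x_{m−1} + a^{ε_m b_m}·x_{m−2}`,
`ε_m = (−1)^{m−1}`, with `x₀ = 1`, `x₋₁ = z⁻¹(a − a⁻¹)`, in the field `ℚ(a, z)`: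
`xₙ = Σ_{c ∈ C} z^{k(c)} · x_{c_l} · Π_{i ∈ 𝓁(c)} (1 − a^{(−1)^{cᵢ−1} b_{cᵢ}})/(a − a⁻¹)
      · Π_{i ∈ 𝓇(c)} a^{(−1)^{cᵢ−1} b_{cᵢ}}`. -/
theorem stmt12 (n : ℤ) (hn : 1 ≤ n) (b : ℤ → ℤ)
    (hb : ∀ i : ℤ, 1 ≤ i → i ≤ n → b i ≠ 0 ∧ Even (b i))
    (a z : RatFunc2)
    (ha : a = algebraMap (MvPolynomial (Fin 2) ℚ) RatFunc2 (MvPolynomial.X 0))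
    (hz : z = algebraMap (MvPolynomial (Fin 2) ℚ) RatFunc2 (MvPolynomial.X 1))
    (x : ℤ → RatFunc2) (hx0 : x 0 = 1) (hxneg : x (-1) = z⁻¹ * (a - a⁻¹))
    (hrec : ∀ m : ℤ, 1 ≤ m → m ≤ n →
      x m = z * ((1 - a ^ ((((-1 : ℤˣ) ^ (m - 1) : ℤˣ) : ℤ) * b m)) / (a - a⁻¹)) * x (m - 1)
          + a ^ ((((-1 : ℤˣ) ^ (m - 1) : ℤˣ) : ℤ) * b m) * x (m - 2)) :
    x n = ∑ᶠ c ∈ CSeq n,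
      z ^ kOf c * x (c.getLastD 0) *
        ((lSteps c).map (fun p =>
          (1 - a ^ ((((-1 : ℤˣ) ^ (p.1 - 1) : ℤˣ) : ℤ) * b p.1)) / (a - a⁻¹))).prod *
        ((rSteps c).map (fun p =>
          a ^ ((((-1 : ℤˣ) ^ (p.1 - 1) : ℤˣ) : ℤ) * b p.1))).prod := by
  set F : List ℤ → RatFunc2 := fun c =>
      z ^ kOf c * x (c.getLastD 0) *
        ((lSteps c).map (fun p =>
          (1 - a ^ ((((-1 : ℤˣ) ^ (p.1 - 1) : ℤˣ) : ℤ) * b p.1)) / (a - a⁻¹))).prod *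
        ((rSteps c).map (fun p =>
          a ^ ((((-1 : ℤˣ) ^ (p.1 - 1) : ℤˣ) : ℤ) * b p.1))).prod with hF
  have stepL : ∀ m : ℤ, ∀ c' : List ℤ, c'.head? = some (m - 1) →
      F (m :: c') = z * ((1 - a ^ ((((-1 : ℤˣ) ^ (m - 1) : ℤˣ) : ℤ) * b m)) / (a - a⁻¹))
        * F c' := by
    intro m c' hh
    match c' with
    | [] => simp at hh
    | w :: t =>
      simp only [List.head?_cons, Option.some.injEq] at hh
      have hz1 : (m :: w :: t).zip (m :: w :: t).tail
          = (m, w) :: ((w :: t).zip (w :: t).tail) := rfl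
      have hl : lSteps (m :: w :: t) = (m, w) :: lSteps (w :: t) := by
        unfold lSteps; rw [hz1, List.filter_cons_of_pos]; simp; omega
      have hr : rSteps (m :: w :: t) = rSteps (w :: t) := by
        unfold rSteps; rw [hz1, List.filter_cons_of_neg]; simp; omega
      have hk : kOf (m :: w :: t) = kOf (w :: t) + 1 := by
        unfold kOf; rw [hl, List.length_cons]
      have hlast : (m :: w :: t).getLastD 0 = (w :: t).getLastD 0 := by
        simp [List.getLastD_cons]
      simp only [hF, hl, hr, hk, hlast, List.map_cons, List.prod_cons, pow_succ]
      ring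
  have stepR : ∀ m : ℤ, ∀ c' : List ℤ, c'.head? = some (m - 2) →
      F (m :: c') = a ^ ((((-1 : ℤˣ) ^ (m - 1) : ℤˣ) : ℤ) * b m) * F c' := by
    intro m c' hh
    match c' with
    | [] => simp at hh
    | w :: t =>
      simp only [List.head?_cons, Option.some.injEq] at hh
      have hz1 : (m :: w :: t).zip (m :: w :: t).tail
          = (m, w) :: ((w :: t).zip (w :: t).tail) := rfl
      have hl : lSteps (m :: w :: t) = lSteps (w :: t) := by
        unfold lSteps; rw [hz1, List.filter_cons_of_neg]; simp; omega
      have hr : rSteps (m :: w :: t) = (m, w) :: rSteps (w :: t) := by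
        unfold rSteps; rw [hz1, List.filter_cons_of_pos]; simp; omega
      have hk : kOf (m :: w :: t) = kOf (w :: t) := by unfold kOf; rw [hl]
      have hlast : (m :: w :: t).getLastD 0 = (w :: t).getLastD 0 := by
        simp [List.getLastD_cons]
      simp only [hF, hl, hr, hk, hlast, List.map_cons, List.prod_cons]
      ring
  have key : ∀ k : ℕ, (k : ℤ) - 1 ≤ n → x ((k : ℤ) - 1) = ∑ᶠ c ∈ CSeq ((k : ℤ) - 1), F c := by
    intro k
    induction k using Nat.strong_induction_on with
    | _ k IH =>
      obtain _ | _ | k := k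
      · intro _
        have h0 : ((0 : ℕ) : ℤ) - 1 = -1 := by norm_num
        rw [h0, cseq_small (by norm_num), if_pos (Or.inr rfl), finsum_mem_singleton]
        simp [hF, kOf, lSteps, rSteps]
      · intro _
        have h0 : ((1 : ℕ) : ℤ) - 1 = 0 := by norm_num
        rw [h0, cseq_small le_rfl, if_pos (Or.inl rfl), finsum_mem_singleton]
        simp [hF, kOf, lSteps, rSteps]
      · intro hle
        have hm' : ((k + 1 + 1 : ℕ) : ℤ) - 1 = (k : ℤ) + 1 := by push_cast; ring
        set m : ℤ := (k : ℤ) + 1 with hmdef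
        rw [hm'] at hle ⊢
        have hm1 : (1 : ℤ) ≤ m := by omega
        have hfin1 := cseq_finite (m - 1)
        have hfin2 := cseq_finite (m - 2)
        have hdisj : Disjoint (List.cons m '' CSeq (m - 1)) (List.cons m '' CSeq (m - 2)) := by
          rw [Set.disjoint_left]
          rintro c ⟨c1, hc1, rfl⟩ ⟨c2, hc2, hc⟩
          obtain rfl : c2 = c1 := List.cons_injective hc
          have h1 := hc1.2.1
          have h2 := hc2.2.1
          rw [h1] at h2
          simp only [Option.some.injEq] at h2
          omega
        rw [cseq_decomp hm1,
          finsum_mem_union hdisj (hfin1.image _) (hfin2.image _),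
          finsum_mem_image (List.cons_injective.injOn),
          finsum_mem_image (List.cons_injective.injOn),
          finsum_mem_congr rfl (fun c' hc' => stepL m c' hc'.2.1),
          finsum_mem_congr rfl (fun c' hc' => stepR m c' hc'.2.1),
          finsum_mem_mul_left' hfin1, finsum_mem_mul_left' hfin2]
        have e1 : ((k + 1 : ℕ) : ℤ) - 1 = m - 1 := by push_cast; ring
        have e2 : ((k : ℕ) : ℤ) - 1 = m - 2 := by push_cast; ring
        have IH1 := IH (k + 1) (by omega) (by omega)
        have IH2 := IH k (by omega) (by omega)
        rw [e1] at IH1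
        rw [e2] at IH2
        rw [hrec m hm1 hle, IH1, IH2]
  have hcast : (((n + 1).toNat : ℤ)) - 1 = n := by
    rw [Int.toNat_of_nonneg (by omega)]; ring
  have h := key (n + 1).toNat (by rw [hcast])
  rw [hcast] at h
  exact h
end
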